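/- Continuity (in weak convergence) of the map sending marginals to the coupling set: Let X, Y be Polish metric spaces and suppose μₙ → μ weakly on X and νₙ → ν weakly on Y. Then the coupling sets Π(μₙ,νₙ) converge to Π(μ,ν) in the Hausdorff metric induced by the Kantorovich–Rubinshtein metric on probability measures on X×Y. -/

import Mathlib

open MeasureTheory Filter
open scoped ENNReal Topology

def IsCoupling {A B : Type*} [MeasurableSpace A] [MeasurableSpace B]
    (σ : Measure (A × B)) (μ : Measure A) (ν : Measure B) : Prop :=
  σ.map Prod.fst = μ ∧ σ.map Prod.snd = ν

/-- The Kantorovich–Rubinshtein distance on probability measures on `X × Y`,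
with respect to the sum metric on the product. -/
noncomputable def dKR {X Y : Type*} [MetricSpace X] [MetricSpace Y]
    [MeasurableSpace X] [MeasurableSpace Y]
    (σ τ : Measure (X × Y)) : ℝ :=
  sSup {r : ℝ | ∃ f : X × Y → ℝ,
    (∀ p q : X × Y, |f p - f q| ≤ dist p.1 q.1 + dist p.2 q.2) ∧
    (∀ p, |f p| ≤ 1) ∧ r = ∫ p, f p ∂σ - ∫ p, f p ∂τ}


open ProbabilityTheory Set Metric

lemma isProbabilityMeasure_of_coupling {A B : Type*} [MeasurableSpace A] [MeasurableSpace B]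
    {σ : Measure (A × B)} {μ : Measure A} {ν : Measure B} (h : IsCoupling σ μ ν)
    [IsProbabilityMeasure μ] : IsProbabilityMeasure σ := by
  constructor
  have : σ.map Prod.fst Set.univ = 1 := by rw [h.1, measure_univ]
  rwa [Measure.map_apply measurable_fst MeasurableSet.univ, Set.preimage_univ] at this

lemma integrable_of_abs_le {Z : Type*} [MeasurableSpace Z] {ρ : Measure Z} [IsFiniteMeasure ρ]
    {f : Z → ℝ} (hf : AEStronglyMeasurable f ρ) {C : ℝ} (h : ∀ z, |f z| ≤ C) :
    Integrable f ρ :=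
  ⟨hf, HasFiniteIntegral.of_bounded (C := C) (ae_of_all _ h)⟩

section XY

variable {X Y : Type*} [Nonempty X] [Nonempty Y]
    [MetricSpace X] [PolishSpace X] [MeasurableSpace X] [BorelSpace X]
    [MetricSpace Y] [PolishSpace Y] [MeasurableSpace Y] [BorelSpace Y]

lemma continuous_of_lip {f : X × Y → ℝ}
    (hf : ∀ p q, |f p - f q| ≤ dist p.1 q.1 + dist p.2 q.2) : Continuous f := by
  rw [Metric.continuous_iff]
  intro p ε hε
  refine ⟨ε/3, by linarith, fun q hq => ?_⟩
  rw [Prod.dist_eq] at hq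
  have h1 : dist q.1 p.1 < ε/3 := lt_of_le_of_lt (le_max_left _ _) hq
  have h2 : dist q.2 p.2 < ε/3 := lt_of_le_of_lt (le_max_right _ _) hq
  calc dist (f q) (f p) = |f q - f p| := Real.dist_eq _ _
    _ ≤ dist q.1 p.1 + dist q.2 p.2 := hf q p
    _ < ε := by linarith

lemma abs_sub_le_min_add {f : X × Y → ℝ}
    (hf1 : ∀ p q, |f p - f q| ≤ dist p.1 q.1 + dist p.2 q.2)
    (hf2 : ∀ p, |f p| ≤ 1) (p q : X × Y) :
    |f p - f q| ≤ min (dist p.1 q.1) 2 + min (dist p.2 q.2) 2 := by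
  have h1 := hf1 p q
  have hp := abs_le.mp (hf2 p)
  have hq := abs_le.mp (hf2 q)
  have h2 : |f p - f q| ≤ 2 := abs_le.mpr (by constructor <;> linarith)
  have d1 : (0:ℝ) ≤ dist p.1 q.1 := dist_nonneg
  have d2 : (0:ℝ) ≤ dist p.2 q.2 := dist_nonneg
  rcases le_total (dist p.1 q.1) 2 with h | h <;> rcases le_total (dist p.2 q.2) 2 with h' | h' <;>
    simp only [min_eq_left, min_eq_right, h, h'] <;> linarith

lemma glue {μ' : Measure X} {ν' : Measure Y} {α : Measure (X × X)} {β : Measure (Y × Y)}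
    {τ : Measure (X × Y)} {μ : Measure X} {ν : Measure Y}
    [IsProbabilityMeasure α] [IsProbabilityMeasure β] [IsProbabilityMeasure τ]
    (hα : IsCoupling α μ μ') (hβ : IsCoupling β ν ν') (hτ : IsCoupling τ μ ν) :
    ∃ σ : Measure (X × Y), IsProbabilityMeasure σ ∧ IsCoupling σ μ' ν' ∧
      ∀ f : X × Y → ℝ, (∀ p q, |f p - f q| ≤ dist p.1 q.1 + dist p.2 q.2) →
        (∀ p, |f p| ≤ 1) →
        |(∫ p, f p ∂σ) - ∫ p, f p ∂τ| ≤
          (∫ p, min (dist p.1 p.2) 2 ∂α) + ∫ p, min (dist p.1 p.2) 2 ∂β := by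
  classical
  set κ := α.condKernel with hκ
  set lam := β.condKernel with hlam
  set K : Kernel (X × Y) (X × Y) :=
    (κ.comap Prod.fst measurable_fst) ×ₖ (lam.comap Prod.snd measurable_snd) with hK
  set γ : Measure ((X × Y) × (X × Y)) := τ.compProd K with hγ
  have hφ1 : Measurable (fun pq : (X × Y) × (X × Y) => (pq.1.1, pq.2.1)) :=
    (measurable_fst.fst).prodMk (measurable_snd.fst)
  have hφ2 : Measurable (fun pq : (X × Y) × (X × Y) => (pq.1.2, pq.2.2)) :=
    (measurable_fst.snd).prodMk (measurable_snd.snd)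
  have key1 : γ.map (fun pq => (pq.1.1, pq.2.1)) = α := by
    ext s hs
    rw [Measure.map_apply hφ1 hs, Measure.compProd_apply (hφ1 hs)]
    have hpt : ∀ p : X × Y,
        K p (Prod.mk p ⁻¹' ((fun pq : (X × Y) × (X × Y) => (pq.1.1, pq.2.1)) ⁻¹' s))
          = κ p.1 (Prod.mk p.1 ⁻¹' s) := by
      intro p
      have hset : (Prod.mk p ⁻¹' ((fun pq : (X × Y) × (X × Y) => (pq.1.1, pq.2.1)) ⁻¹' s))
          = (Prod.mk p.1 ⁻¹' s) ×ˢ (univ : Set Y) := by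
        ext q; simp [Set.mem_prod]
      rw [hK, Kernel.prod_apply, hset, Measure.prod_prod, Kernel.comap_apply,
        Kernel.comap_apply, measure_univ, mul_one]
    simp_rw [hpt]
    rw [← lintegral_map (Kernel.measurable_kernel_prodMk_left hs) measurable_fst, hτ.1,
      show μ = α.fst from hα.1.symm, ← Measure.compProd_apply hs,
      α.disintegrate α.condKernel]
  have key2 : γ.map (fun pq => (pq.1.2, pq.2.2)) = β := by
    ext s hs
    rw [Measure.map_apply hφ2 hs, Measure.compProd_apply (hφ2 hs)]
    have hpt : ∀ p : X × Y,
        K p (Prod.mk p ⁻¹' ((fun pq : (X × Y) × (X × Y) => (pq.1.2, pq.2.2)) ⁻¹' s))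
          = lam p.2 (Prod.mk p.2 ⁻¹' s) := by
      intro p
      have hset : (Prod.mk p ⁻¹' ((fun pq : (X × Y) × (X × Y) => (pq.1.2, pq.2.2)) ⁻¹' s))
          = (univ : Set X) ×ˢ (Prod.mk p.2 ⁻¹' s) := by
        ext q; simp [Set.mem_prod]
      rw [hK, Kernel.prod_apply, hset, Measure.prod_prod, Kernel.comap_apply,
        Kernel.comap_apply, measure_univ, one_mul]
    simp_rw [hpt]
    rw [← lintegral_map (Kernel.measurable_kernel_prodMk_left hs) measurable_snd, hτ.2,
      show ν = β.fst from hβ.1.symm, ← Measure.compProd_apply hs,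
      β.disintegrate β.condKernel]
  have hγfst : γ.map Prod.fst = τ := Measure.fst_compProd τ K
  refine ⟨γ.map Prod.snd, ?_, ⟨?_, ?_⟩, ?_⟩
  · exact Measure.isProbabilityMeasure_map measurable_snd.aemeasurable
  · rw [Measure.map_map measurable_fst measurable_snd,
      show (Prod.fst ∘ Prod.snd : (X × Y) × (X × Y) → X)
        = (Prod.snd ∘ fun pq : (X × Y) × (X × Y) => (pq.1.1, pq.2.1)) from rfl,
      ← Measure.map_map measurable_snd hφ1, key1, hα.2]
  · rw [Measure.map_map measurable_snd measurable_snd,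
      show (Prod.snd ∘ Prod.snd : (X × Y) × (X × Y) → Y)
        = (Prod.snd ∘ fun pq : (X × Y) × (X × Y) => (pq.1.2, pq.2.2)) from rfl,
      ← Measure.map_map measurable_snd hφ2, key2, hβ.2]
  · intro f hf1 hf2
    have hfc : Continuous f := continuous_of_lip hf1
    have hg1 : ∫ p, f p ∂(γ.map Prod.snd) = ∫ pq, f pq.2 ∂γ :=
      integral_map measurable_snd.aemeasurable hfc.aestronglyMeasurable
    have hg2 : ∫ p, f p ∂τ = ∫ pq, f pq.1 ∂γ := by
      rw [← hγfst]
      exact integral_map measurable_fst.aemeasurable hfc.aestronglyMeasurable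
    have cmin : Continuous fun p : X × X => min (dist p.1 p.2) 2 :=
      (continuous_dist.comp (continuous_fst.prodMk continuous_snd)).min continuous_const
    have cminY : Continuous fun p : Y × Y => min (dist p.1 p.2) 2 :=
      (continuous_dist.comp (continuous_fst.prodMk continuous_snd)).min continuous_const
    have habs : ∀ (Z : Type) , True := fun _ => trivial
    have hminb : ∀ (a : ℝ), 0 ≤ a → |min a 2| ≤ 2 := by
      intro a ha; rw [abs_of_nonneg (le_min ha (by norm_num))]; exact min_le_right _ _
    have int1 : Integrable (fun pq : (X × Y) × (X × Y) => f pq.2) γ :=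
      integrable_of_abs_le (hfc.comp continuous_snd).aestronglyMeasurable (C := 1)
        (fun z => hf2 _)
    have int2 : Integrable (fun pq : (X × Y) × (X × Y) => f pq.1) γ :=
      integrable_of_abs_le (hfc.comp continuous_fst).aestronglyMeasurable (C := 1)
        (fun z => hf2 _)
    have intA : Integrable (fun pq : (X × Y) × (X × Y) => min (dist pq.1.1 pq.2.1) 2) γ :=
      integrable_of_abs_le
        ((cmin.comp ((continuous_fst.fst).prodMk (continuous_snd.fst)))).aestronglyMeasurable
        (C := 2) (fun z => hminb _ dist_nonneg)
    have intB : Integrable (fun pq : (X × Y) × (X × Y) => min (dist pq.1.2 pq.2.2) 2) γ :=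
      integrable_of_abs_le
        ((cminY.comp ((continuous_fst.snd).prodMk (continuous_snd.snd)))).aestronglyMeasurable
        (C := 2) (fun z => hminb _ dist_nonneg)
    rw [hg1, hg2, ← integral_sub int1 int2]
    have step1 : |∫ pq, (f pq.2 - f pq.1) ∂γ| ≤ ∫ pq, |f pq.2 - f pq.1| ∂γ :=
      by simpa [Real.norm_eq_abs] using
        norm_integral_le_integral_norm (μ := γ) (fun pq : (X × Y) × (X × Y) => f pq.2 - f pq.1)
    have step2 : ∫ pq, |f pq.2 - f pq.1| ∂γ ≤
        ∫ pq : (X × Y) × (X × Y), (min (dist pq.1.1 pq.2.1) 2 + min (dist pq.1.2 pq.2.2) 2) ∂γ := by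
      refine integral_mono (int1.sub int2).abs (intA.add intB) ?_
      intro pq
      have := abs_sub_le_min_add hf1 hf2 pq.2 pq.1
      simpa [dist_comm] using this
    have step3 : ∫ pq : (X × Y) × (X × Y), (min (dist pq.1.1 pq.2.1) 2 + min (dist pq.1.2 pq.2.2) 2) ∂γ
        = (∫ p, min (dist p.1 p.2) 2 ∂α) + ∫ p, min (dist p.1 p.2) 2 ∂β := by
      rw [integral_add intA intB]
      congr 1
      · rw [← key1, integral_map hφ1.aemeasurable cmin.aestronglyMeasurable]
      · rw [← key2, integral_map hφ2.aemeasurable cminY.aestronglyMeasurable]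
    calc |∫ pq, (f pq.2 - f pq.1) ∂γ| ≤ _ := step1
      _ ≤ _ := step2
      _ = _ := step3

end XY

lemma coupling_of_partition {Z : Type*} [MetricSpace Z] [SecondCountableTopology Z] [MeasurableSpace Z] [BorelSpace Z]
    (ρ ρ' : Measure Z) [IsProbabilityMeasure ρ] [IsProbabilityMeasure ρ']
    (E : ℕ → Set Z) (hmeas : ∀ i, MeasurableSet (E i))
    (hdisj : Pairwise (Function.onFun Disjoint E)) (hcover : ⋃ i, E i = univ)
    {δ : ℝ} (hδ : 0 ≤ δ) (hdiam : ∀ i, diam (E i) ≤ δ)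
    (hbdd : ∀ i, Bornology.IsBounded (E i)) :
    ∃ α : Measure (Z × Z), IsProbabilityMeasure α ∧ IsCoupling α ρ ρ' ∧
      ∫ p, min (dist p.1 p.2) 2 ∂α ≤
        δ + 2 * (1 - (∑' i, min (ρ (E i)) (ρ' (E i))).toReal) := by
  classical
  set m : ℕ → ℝ≥0∞ := fun i => min (ρ (E i)) (ρ' (E i)) with hm
  set c : ℕ → ℝ≥0∞ := fun i => m i / (ρ (E i) * ρ' (E i)) with hc
  set L : ℝ≥0∞ := 1 - ∑' i, m i with hLdef
  set ρrem : Measure Z := Measure.sum (fun i => ((ρ (E i) - m i) / ρ (E i)) • ρ.restrict (E i))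
    with hρrem
  set ρ'rem : Measure Z := Measure.sum (fun i => ((ρ' (E i) - m i) / ρ' (E i)) • ρ'.restrict (E i))
    with hρ'rem
  set α : Measure (Z × Z) :=
    Measure.sum (fun i => c i • ((ρ.restrict (E i)).prod (ρ'.restrict (E i))))
      + L⁻¹ • (ρrem.prod ρ'rem) with hα
  -- basic facts
  have hEfin : ∀ i, ρ (E i) ≠ ∞ := fun i => measure_ne_top _ _
  have hEfin' : ∀ i, ρ' (E i) ≠ ∞ := fun i => measure_ne_top _ _
  have hm1 : ∀ i, m i ≤ ρ (E i) := fun i => min_le_left _ _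
  have hm2 : ∀ i, m i ≤ ρ' (E i) := fun i => min_le_right _ _
  have hsum1 : ∑' i, ρ (E i) = 1 := by
    rw [← measure_iUnion hdisj hmeas, hcover, measure_univ]
  have hsum1' : ∑' i, ρ' (E i) = 1 := by
    rw [← measure_iUnion hdisj hmeas, hcover, measure_univ]
  have hMsum : ∑' i, m i ≤ 1 := by
    rw [← hsum1]; exact ENNReal.tsum_le_tsum hm1
  have hMfin : ∑' i, m i ≠ ∞ := (lt_of_le_of_lt hMsum ENNReal.one_lt_top).ne
  have hL1 : L ≤ 1 := tsub_le_self
  have hLfin : L ≠ ∞ := (lt_of_le_of_lt hL1 ENNReal.one_lt_top).ne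
  -- total masses of remainder measures
  have hrem_univ : ρrem univ = L := by
    rw [hρrem, Measure.sum_apply _ MeasurableSet.univ]
    have : ∀ i, (((ρ (E i) - m i) / ρ (E i)) • ρ.restrict (E i)) univ = ρ (E i) - m i := by
      intro i
      rw [Measure.smul_apply, smul_eq_mul, Measure.restrict_apply_univ]
      by_cases h0 : ρ (E i) = 0
      · have : m i = 0 := le_antisymm (h0 ▸ hm1 i) zero_le
        simp [h0, this]
      · exact ENNReal.div_mul_cancel h0 (hEfin i)
    simp_rw [this]
    rw [ENNReal.tsum_sub hMfin hm1, hsum1]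
  have hrem'_univ : ρ'rem univ = L := by
    rw [hρ'rem, Measure.sum_apply _ MeasurableSet.univ]
    have : ∀ i, (((ρ' (E i) - m i) / ρ' (E i)) • ρ'.restrict (E i)) univ = ρ' (E i) - m i := by
      intro i
      rw [Measure.smul_apply, smul_eq_mul, Measure.restrict_apply_univ]
      by_cases h0 : ρ' (E i) = 0
      · have : m i = 0 := le_antisymm (h0 ▸ hm2 i) zero_le
        simp [h0, this]
      · exact ENNReal.div_mul_cancel h0 (hEfin' i)
    simp_rw [this]
    rw [ENNReal.tsum_sub hMfin hm2, hsum1']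
  -- the fst marginal
  have hfst : α.map Prod.fst = ρ := by
    ext s hs
    have hps : MeasurableSet (Prod.fst ⁻¹' s : Set (Z × Z)) := measurable_fst hs
    have hsprod : (Prod.fst ⁻¹' s : Set (Z × Z)) = s ×ˢ (univ : Set Z) := by
      ext q; simp
    rw [Measure.map_apply measurable_fst hs, Measure.add_apply,
      Measure.sum_apply _ hps]
    have hterm : ∀ i, (c i • ((ρ.restrict (E i)).prod (ρ'.restrict (E i)))) (Prod.fst ⁻¹' s)
        = (m i / ρ (E i)) * ρ (s ∩ E i) := by
      intro i
      rw [Measure.smul_apply, smul_eq_mul, hsprod, Measure.prod_prod,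
        Measure.restrict_apply hs, Measure.restrict_apply_univ]
      by_cases h0' : ρ' (E i) = 0
      · have hm0 : m i = 0 := le_antisymm (h0' ▸ hm2 i) zero_le
        simp [hc, hm0]
      by_cases h0 : ρ (E i) = 0
      · have : ρ (s ∩ E i) = 0 :=
          le_antisymm (le_trans (measure_mono inter_subset_right) h0.le) zero_le
        simp [this]
      · rw [hc]
        have : m i / (ρ (E i) * ρ' (E i)) * (ρ (s ∩ E i) * ρ' (E i))
            = (m i / ρ (E i)) * ρ (s ∩ E i) * (ρ' (E i) / ρ' (E i)) := by
          rw [ENNReal.div_eq_inv_mul, ENNReal.div_eq_inv_mul, ENNReal.div_eq_inv_mul,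
            ENNReal.mul_inv (Or.inl h0) (Or.inl (hEfin i))]
          ring
        rw [this, ENNReal.div_self h0' (hEfin' i), mul_one]
    simp_rw [hterm]
    have hremterm : (L⁻¹ • (ρrem.prod ρ'rem)) (Prod.fst ⁻¹' s) = ρrem s := by
      rw [Measure.smul_apply, smul_eq_mul, hsprod, Measure.prod_prod, hrem'_univ]
      by_cases hL0 : L = 0
      · have : ρrem s = 0 :=
          le_antisymm (le_trans (measure_mono (subset_univ s)) (hrem_univ ▸ hL0.le)) zero_le
        simp [hL0, this]
      · rw [mul_comm (ρrem s) L, ← mul_assoc, ← ENNReal.div_eq_inv_mul,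
          ENNReal.div_self hL0 hLfin, one_mul]
    rw [hremterm, hρrem, Measure.sum_apply _ hs]
    have hremi : ∀ i, (((ρ (E i) - m i) / ρ (E i)) • ρ.restrict (E i)) s
        = ((ρ (E i) - m i) / ρ (E i)) * ρ (s ∩ E i) := by
      intro i
      rw [Measure.smul_apply, smul_eq_mul, Measure.restrict_apply hs]
    simp_rw [hremi]
    rw [← ENNReal.tsum_add]
    have hcomb : ∀ i, m i / ρ (E i) * ρ (s ∩ E i) + (ρ (E i) - m i) / ρ (E i) * ρ (s ∩ E i)
        = ρ (s ∩ E i) := by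
      intro i
      by_cases h0 : ρ (E i) = 0
      · have : ρ (s ∩ E i) = 0 :=
          le_antisymm (le_trans (measure_mono inter_subset_right) h0.le) zero_le
        simp [this]
      · rw [← add_mul, ENNReal.div_add_div_same, add_tsub_cancel_of_le (hm1 i),
          ENNReal.div_self h0 (hEfin i), one_mul]
    simp_rw [hcomb]
    rw [← measure_iUnion (fun i j hij => ((hdisj hij).mono inter_subset_right inter_subset_right))
      (fun i => hs.inter (hmeas i)), ← inter_iUnion, hcover, inter_univ]
  -- the snd marginal
  have hsnd : α.map Prod.snd = ρ' := by
    ext s hs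
    have hps : MeasurableSet (Prod.snd ⁻¹' s : Set (Z × Z)) := measurable_snd hs
    have hsprod : (Prod.snd ⁻¹' s : Set (Z × Z)) = (univ : Set Z) ×ˢ s := by
      ext q; simp
    rw [Measure.map_apply measurable_snd hs, Measure.add_apply,
      Measure.sum_apply _ hps]
    have hterm : ∀ i, (c i • ((ρ.restrict (E i)).prod (ρ'.restrict (E i)))) (Prod.snd ⁻¹' s)
        = (m i / ρ' (E i)) * ρ' (s ∩ E i) := by
      intro i
      rw [Measure.smul_apply, smul_eq_mul, hsprod, Measure.prod_prod,
        Measure.restrict_apply hs, Measure.restrict_apply_univ]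
      by_cases h0 : ρ (E i) = 0
      · have hm0 : m i = 0 := le_antisymm (h0 ▸ hm1 i) zero_le
        simp [hc, hm0]
      by_cases h0' : ρ' (E i) = 0
      · have : ρ' (s ∩ E i) = 0 :=
          le_antisymm (le_trans (measure_mono inter_subset_right) h0'.le) zero_le
        simp [this]
      · rw [hc]
        have : m i / (ρ (E i) * ρ' (E i)) * (ρ (E i) * ρ' (s ∩ E i))
            = (m i / ρ' (E i)) * ρ' (s ∩ E i) * (ρ (E i) / ρ (E i)) := by
          rw [ENNReal.div_eq_inv_mul, ENNReal.div_eq_inv_mul, ENNReal.div_eq_inv_mul,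
            ENNReal.mul_inv (Or.inl h0) (Or.inl (hEfin i))]
          ring
        rw [this, ENNReal.div_self h0 (hEfin i), mul_one]
    simp_rw [hterm]
    have hremterm : (L⁻¹ • (ρrem.prod ρ'rem)) (Prod.snd ⁻¹' s) = ρ'rem s := by
      rw [Measure.smul_apply, smul_eq_mul, hsprod, Measure.prod_prod, hrem_univ]
      by_cases hL0 : L = 0
      · have : ρ'rem s = 0 :=
          le_antisymm (le_trans (measure_mono (subset_univ s)) (hrem'_univ ▸ hL0.le)) zero_le
        simp [hL0, this]
      · rw [← mul_assoc, ← ENNReal.div_eq_inv_mul, ENNReal.div_self hL0 hLfin, one_mul]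
    rw [hremterm, hρ'rem, Measure.sum_apply _ hs]
    have hremi : ∀ i, (((ρ' (E i) - m i) / ρ' (E i)) • ρ'.restrict (E i)) s
        = ((ρ' (E i) - m i) / ρ' (E i)) * ρ' (s ∩ E i) := by
      intro i
      rw [Measure.smul_apply, smul_eq_mul, Measure.restrict_apply hs]
    simp_rw [hremi]
    rw [← ENNReal.tsum_add]
    have hcomb : ∀ i, m i / ρ' (E i) * ρ' (s ∩ E i) + (ρ' (E i) - m i) / ρ' (E i) * ρ' (s ∩ E i)
        = ρ' (s ∩ E i) := by
      intro i
      by_cases h0 : ρ' (E i) = 0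
      · have : ρ' (s ∩ E i) = 0 :=
          le_antisymm (le_trans (measure_mono inter_subset_right) h0.le) zero_le
        simp [this]
      · rw [← add_mul, ENNReal.div_add_div_same, add_tsub_cancel_of_le (hm2 i),
          ENNReal.div_self h0 (hEfin' i), one_mul]
    simp_rw [hcomb]
    rw [← measure_iUnion (fun i j hij => ((hdisj hij).mono inter_subset_right inter_subset_right))
      (fun i => hs.inter (hmeas i)), ← inter_iUnion, hcover, inter_univ]
  have hprob : IsProbabilityMeasure α := by
    have h : α.map Prod.fst univ = 1 := by rw [hfst, measure_univ]
    rw [Measure.map_apply measurable_fst MeasurableSet.univ, preimage_univ] at h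
    exact ⟨h⟩
  -- the integral estimate
  refine ⟨α, hprob, ⟨hfst, hsnd⟩, ?_⟩
  have cmin : Continuous fun p : Z × Z => min (dist p.1 p.2) 2 :=
    (continuous_dist.comp (continuous_fst.prodMk continuous_snd)).min continuous_const
  have hnn : ∀ p : Z × Z, 0 ≤ min (dist p.1 p.2) 2 :=
    fun p => le_min dist_nonneg (by norm_num)
  rw [integral_eq_lintegral_of_nonneg_ae (ae_of_all _ hnn) cmin.aestronglyMeasurable]
  set g : Z × Z → ℝ≥0∞ := fun p => ENNReal.ofReal (min (dist p.1 p.2) 2) with hg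
  have hlin : ∫⁻ p, g p ∂α ≤ ENNReal.ofReal δ + 2 * L := by
    rw [hα, lintegral_add_measure, lintegral_sum_measure]
    have hTa : ∑' i, ∫⁻ p, g p ∂(c i • ((ρ.restrict (E i)).prod (ρ'.restrict (E i))))
        ≤ ENNReal.ofReal δ := by
      have hone : ∀ i, ∫⁻ p, g p ∂((ρ.restrict (E i)).prod (ρ'.restrict (E i)))
          ≤ ENNReal.ofReal δ * (ρ (E i) * ρ' (E i)) := by
        intro i
        have hnull : ((ρ.restrict (E i)).prod (ρ'.restrict (E i))) ((E i ×ˢ E i)ᶜ) = 0 := by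
          rw [compl_prod_eq_union]
          refine le_antisymm (le_trans (measure_union_le _ _) ?_) zero_le
          rw [Measure.prod_prod, Measure.prod_prod, Measure.restrict_apply (hmeas i).compl,
            Measure.restrict_apply (hmeas i).compl]
          simp
        have hae : ∀ᵐ p ∂((ρ.restrict (E i)).prod (ρ'.restrict (E i))),
            g p ≤ ENNReal.ofReal δ := by
          rw [ae_iff]
          refine le_antisymm (le_trans (measure_mono ?_) hnull.le) zero_le
          intro p hp
          simp only [mem_setOf_eq, not_le] at hp
          intro hmem
          rcases hmem with ⟨hp1, hp2⟩
          have : dist p.1 p.2 ≤ δ := dist_le_diam_of_mem (hbdd i) hp1 hp2 |>.trans (hdiam i)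
          have : g p ≤ ENNReal.ofReal δ :=
            ENNReal.ofReal_le_ofReal (le_trans (min_le_left _ _) this)
          exact absurd this (not_le.mpr hp)
        calc ∫⁻ p, g p ∂((ρ.restrict (E i)).prod (ρ'.restrict (E i)))
            ≤ ∫⁻ _, ENNReal.ofReal δ ∂((ρ.restrict (E i)).prod (ρ'.restrict (E i))) :=
              lintegral_mono_ae hae
          _ = ENNReal.ofReal δ * (ρ (E i) * ρ' (E i)) := by
              rw [lintegral_const, ← univ_prod_univ, Measure.prod_prod,
                Measure.restrict_apply_univ, Measure.restrict_apply_univ]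
      have hcm : ∀ i, c i * (ρ (E i) * ρ' (E i)) = m i := by
        intro i
        rw [hc]
        by_cases h0 : ρ (E i) = 0
        · have hm0 : m i = 0 := le_antisymm (h0 ▸ hm1 i) zero_le
          simp [h0, hm0]
        by_cases h0' : ρ' (E i) = 0
        · have hm0 : m i = 0 := le_antisymm (h0' ▸ hm2 i) zero_le
          simp [h0', hm0]
        · exact ENNReal.div_mul_cancel (by simp [h0, h0'])
            (ENNReal.mul_ne_top (hEfin i) (hEfin' i))
      calc ∑' i, ∫⁻ p, g p ∂(c i • ((ρ.restrict (E i)).prod (ρ'.restrict (E i))))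
          = ∑' i, c i * ∫⁻ p, g p ∂((ρ.restrict (E i)).prod (ρ'.restrict (E i))) := by
            simp_rw [lintegral_smul_measure, smul_eq_mul]
        _ ≤ ∑' i, c i * (ENNReal.ofReal δ * (ρ (E i) * ρ' (E i))) :=
            ENNReal.tsum_le_tsum (fun i => mul_le_mul_right (hone i) _)
        _ = ENNReal.ofReal δ * ∑' i, c i * (ρ (E i) * ρ' (E i)) := by
            rw [← ENNReal.tsum_mul_left]; congr 1; ext i; ring
        _ = ENNReal.ofReal δ * ∑' i, m i := by simp_rw [hcm]
        _ ≤ ENNReal.ofReal δ * 1 := mul_le_mul_right hMsum _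
        _ = ENNReal.ofReal δ := mul_one _
    have hTb : ∫⁻ p, g p ∂(L⁻¹ • (ρrem.prod ρ'rem)) ≤ 2 * L := by
      rw [lintegral_smul_measure]
      by_cases hL0 : L = 0
      · have : ρrem = 0 := by
          rw [← Measure.measure_univ_eq_zero, hrem_univ, hL0]
        rw [this, Measure.zero_prod, lintegral_zero_measure, smul_zero]
        exact zero_le
      · have hgle : ∀ p : Z × Z, g p ≤ 2 := by
          intro p
          calc g p ≤ ENNReal.ofReal 2 := ENNReal.ofReal_le_ofReal (min_le_right _ _)
            _ = 2 := by norm_num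
        calc L⁻¹ * ∫⁻ p, g p ∂(ρrem.prod ρ'rem)
            ≤ L⁻¹ * ∫⁻ _, 2 ∂(ρrem.prod ρ'rem) :=
              mul_le_mul_right (lintegral_mono hgle) _
          _ = L⁻¹ * (2 * (L * L)) := by
              rw [lintegral_const, ← univ_prod_univ, Measure.prod_prod, hrem_univ, hrem'_univ]
          _ = 2 * L * (L⁻¹ * L) := by ring
          _ = 2 * L := by rw [ENNReal.inv_mul_cancel hL0 hLfin, mul_one]
    exact add_le_add hTa hTb
  have hfin : ENNReal.ofReal δ + 2 * L ≠ ∞ := by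
    apply ENNReal.add_ne_top.mpr
    exact ⟨ENNReal.ofReal_ne_top, ENNReal.mul_ne_top (by norm_num) hLfin⟩
  calc (∫⁻ p, g p ∂α).toReal ≤ (ENNReal.ofReal δ + 2 * L).toReal :=
      ENNReal.toReal_mono hfin hlin
    _ = δ + 2 * (1 - (∑' i, m i).toReal) := by
        rw [ENNReal.toReal_add ENNReal.ofReal_ne_top (ENNReal.mul_ne_top (by norm_num) hLfin),
          ENNReal.toReal_ofReal hδ, ENNReal.toReal_mul, hLdef,
          ENNReal.toReal_sub_of_le hMsum ENNReal.one_ne_top]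
        norm_num

lemma exists_good_coupling {Z : Type*} [MetricSpace Z] [PolishSpace Z]
    [MeasurableSpace Z] [BorelSpace Z] [Nonempty Z]
    {μs : ℕ → ProbabilityMeasure Z} {μ : ProbabilityMeasure Z}
    (h : Tendsto μs atTop (𝓝 μ)) {ε : ℝ} (hε : 0 < ε) :
    ∀ᶠ n in atTop, ∃ α : Measure (Z × Z), IsProbabilityMeasure α ∧
      IsCoupling α (μ : Measure Z) (μs n : Measure Z) ∧
      ∫ p, min (dist p.1 p.2) 2 ∂α ≤ ε := by
  classical
  obtain ⟨xs, hxs⟩ := TopologicalSpace.exists_dense_seq Z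
  -- choose radii with null frontier balls
  have hrad : ∀ k : ℕ, ∃ r : ℝ, r ∈ Ioo (ε/16) (ε/8) ∧
      (μ : Measure Z) (frontier (ball (xs k) r)) = 0 := by
    intro k
    obtain ⟨r, hr, hnull⟩ := exists_null_frontier_thickening (μ : Measure Z) {xs k}
      (show ε/16 < ε/8 by linarith)
    exact ⟨r, hr, by rwa [thickening_singleton] at hnull⟩
  choose r hrIoo hrnull using hrad
  set B : ℕ → Set Z := fun k => ball (xs k) (r k) with hB
  set E : ℕ → Set Z := disjointed B with hE
  have hmeasB : ∀ k, MeasurableSet (B k) := fun k => measurableSet_ball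
  have hmeasE : ∀ i, MeasurableSet (E i) := MeasurableSet.disjointed hmeasB
  have hbddE : ∀ i, Bornology.IsBounded (E i) :=
    fun i => isBounded_ball.subset (disjointed_subset B i)
  have hdiamE : ∀ i, diam (E i) ≤ ε/4 := by
    intro i
    refine (diam_mono (disjointed_subset B i) isBounded_ball).trans ?_
    refine (diam_ball (le_of_lt (lt_trans (by linarith) (hrIoo i).1))).trans ?_
    have := (hrIoo i).2
    linarith
  have hdisjE : Pairwise (Function.onFun Disjoint E) := disjoint_disjointed B
  have hcoverB : ⋃ k, B k = univ := by
    ext z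
    simp only [mem_iUnion, mem_univ, iff_true]
    obtain ⟨k, hk⟩ := Metric.denseRange_iff.mp hxs z (ε/16) (by linarith)
    exact ⟨k, mem_ball.mpr (lt_trans hk (hrIoo k).1)⟩
  have hcoverE : ⋃ i, E i = univ := by rw [hE, iUnion_disjointed, hcoverB]
  -- null frontiers of the partition cells
  have hfrB : (μ : Measure Z) (⋃ k, frontier (B k)) = 0 :=
    measure_iUnion_null fun k => hrnull k
  have hfrE : ∀ i, (μ : Measure Z) (frontier (E i)) = 0 := by
    intro i
    refine measure_mono_null ?_ hfrB
    have hsub : ∀ n : ℕ, frontier (⋂ k, ⋂ (_ : k < n), (B k)ᶜ) ⊆ ⋃ k, frontier (B k) := by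
      intro n
      induction n with
      | zero => simp
      | succ n ih =>
        have hstep : (⋂ k, ⋂ (_ : k < n + 1), (B k)ᶜ)
            = (⋂ k, ⋂ (_ : k < n), (B k)ᶜ) ∩ (B n)ᶜ := by
          ext z
          simp only [mem_iInter, mem_inter_iff, mem_compl_iff]
          constructor
          · intro hz
            exact ⟨fun k hk => hz k (Nat.lt_succ_of_lt hk), hz n (Nat.lt_succ_self n)⟩
          · rintro ⟨h1, h2⟩ k hk
            rcases Nat.lt_succ_iff_lt_or_eq.mp hk with hk' | rfl
            · exact h1 k hk'
            · exact h2
        rw [hstep]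
        refine (frontier_inter_subset _ _).trans ?_
        intro z hz
        rcases hz with hz | hz
        · exact ih hz.1
        · rw [frontier_compl] at hz
          exact mem_iUnion.mpr ⟨n, hz.2⟩
    have : E i ⊆ B i ∩ ⋂ k, ⋂ (_ : k < i), (B k)ᶜ := by
      rw [hE, disjointed_eq_inter_compl]
    have hEeq : E i = B i ∩ ⋂ k, ⋂ (_ : k < i), (B k)ᶜ := by
      rw [hE, disjointed_eq_inter_compl]
    rw [hEeq]
    refine (frontier_inter_subset _ _).trans ?_
    intro z hz
    rcases hz with hz | hz
    · exact mem_iUnion.mpr ⟨i, hz.1⟩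
    · exact hsub i hz.2
  -- portmanteau
  have hconv : ∀ i, Tendsto (fun n => (μs n : Measure Z) (E i)) atTop
      (𝓝 ((μ : Measure Z) (E i))) :=
    fun i => ProbabilityMeasure.tendsto_measure_of_null_frontier_of_tendsto' h (hfrE i)
  have hconvR : ∀ i, Tendsto (fun n => ((μs n : Measure Z) (E i)).toReal) atTop
      (𝓝 (((μ : Measure Z) (E i)).toReal)) :=
    fun i => (ENNReal.tendsto_toReal (measure_ne_top _ _)).comp (hconv i)
  -- choose N
  set S : ℕ → Set Z := fun N => ⋃ i ∈ Finset.range N, E i with hS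
  have hSmono : Monotone S := by
    intro a b hab
    exact biUnion_subset_biUnion_left (Finset.range_subset_range.mpr hab)
  have hStend : Tendsto (fun N => (μ : Measure Z) (S N)) atTop (𝓝 1) := by
    have := tendsto_measure_iUnion_atTop (μ := (μ : Measure Z)) hSmono
    have hU : ⋃ N, S N = univ := by
      rw [← hcoverE]
      ext z
      simp only [hS, mem_iUnion, Finset.mem_range]
      exact ⟨fun ⟨N, i, hi, hz⟩ => ⟨i, hz⟩, fun ⟨i, hz⟩ => ⟨i + 1, i, Nat.lt_succ_self i, hz⟩⟩
    rw [hU, measure_univ] at this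
    exact this
  have hStendR : Tendsto (fun N => ((μ : Measure Z) (S N)).toReal) atTop (𝓝 1) := by
    have := (ENNReal.tendsto_toReal ENNReal.one_ne_top).comp hStend
    simpa [Function.comp_def] using this
  obtain ⟨N, hN⟩ := (hStendR.eventually (eventually_gt_nhds (show 1 - ε/8 < 1 by linarith))).exists
  -- eventual closeness for i < N
  have hev : ∀ᶠ n in atTop, ∀ i ∈ Finset.range N,
      |((μs n : Measure Z) (E i)).toReal - ((μ : Measure Z) (E i)).toReal| < ε/(8*(N+1)) := by
    rw [eventually_all_finset]
    intro i _
    have := (hconvR i).eventually (eventually_abs_sub_lt (((μ : Measure Z) (E i)).toReal)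
      (show (0:ℝ) < ε/(8*(N+1)) by positivity))
    exact this
  filter_upwards [hev] with n hn
  haveI : IsProbabilityMeasure (μ : Measure Z) := μ.2
  haveI : IsProbabilityMeasure (μs n : Measure Z) := (μs n).2
  obtain ⟨α, hαprob, hαcoup, hαint⟩ := coupling_of_partition (μ : Measure Z) (μs n : Measure Z)
    E hmeasE hdisjE hcoverE (by positivity : (0:ℝ) ≤ ε/4) hdiamE hbddE
  refine ⟨α, hαprob, hαcoup, hαint.trans ?_⟩
  -- arithmetic: show ε/4 + 2 * (1 - s) ≤ ε  where s := (∑' ...).toReal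
  set mm : ℕ → ℝ≥0∞ := fun i => min ((μ : Measure Z) (E i)) ((μs n : Measure Z) (E i)) with hmm
  have hmmle : ∀ i, mm i ≤ (μ : Measure Z) (E i) := fun i => min_le_left _ _
  have htsum1 : ∑' i, (μ : Measure Z) (E i) = 1 := by
    rw [← measure_iUnion hdisjE hmeasE, hcoverE, measure_univ]
  have hmmsum_le : ∑' i, mm i ≤ 1 := htsum1 ▸ ENNReal.tsum_le_tsum hmmle
  have hmmfin : ∑' i, mm i ≠ ∞ := (lt_of_le_of_lt hmmsum_le ENNReal.one_lt_top).ne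
  have hlow : 1 - ε/4 ≤ (∑' i, mm i).toReal := by
    have h1 : ∑ i ∈ Finset.range N, mm i ≤ ∑' i, mm i := ENNReal.sum_le_tsum _
    have h2 : (∑ i ∈ Finset.range N, mm i).toReal ≤ (∑' i, mm i).toReal :=
      ENNReal.toReal_mono hmmfin h1
    have h3 : (∑ i ∈ Finset.range N, mm i).toReal
        = ∑ i ∈ Finset.range N, (mm i).toReal := by
      rw [ENNReal.toReal_sum (fun i _ => (lt_of_le_of_lt (le_trans (hmmle i)
        (measure_mono (subset_univ _))) (by simp [measure_univ])).ne)]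
    have h4 : ∀ i, (mm i).toReal
        = min (((μ : Measure Z) (E i)).toReal) (((μs n : Measure Z) (E i)).toReal) :=
      fun i => ENNReal.toReal_min (measure_ne_top _ _) (measure_ne_top _ _)
    have h5 : ∑ i ∈ Finset.range N, ((μ : Measure Z) (E i)).toReal
        = ((μ : Measure Z) (S N)).toReal := by
      rw [hS, measure_biUnion_finset ?_ (fun i _ => hmeasE i), ENNReal.toReal_sum
        (fun i _ => measure_ne_top _ _)]
      exact fun i _ j _ hij => hdisjE hij
    have h6 : ∀ i ∈ Finset.range N, ((μ : Measure Z) (E i)).toReal - ε/(8*(N+1))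
        ≤ (mm i).toReal := by
      intro i hi
      rw [h4 i]
      have := hn i hi
      rw [abs_sub_lt_iff] at this
      rcases le_total (((μ : Measure Z) (E i)).toReal) (((μs n : Measure Z) (E i)).toReal)
        with hle | hle
      · rw [min_eq_left hle]; linarith [this.2]
      · rw [min_eq_right hle]; linarith [this.2]
    have h7 : ∑ i ∈ Finset.range N, (((μ : Measure Z) (E i)).toReal - ε/(8*(N+1)))
        ≤ ∑ i ∈ Finset.range N, (mm i).toReal := Finset.sum_le_sum h6
    rw [Finset.sum_sub_distrib, Finset.sum_const, Finset.card_range, h5] at h7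
    have hNsmul : (N : ℝ) * (ε/(8*(N+1))) ≤ ε/8 := by
      have h1 : (N:ℝ) * (ε/(8*(N+1))) ≤ ((N:ℝ)+1) * (ε/(8*((N:ℝ)+1))) := by
        push_cast
        apply mul_le_mul_of_nonneg_right (by linarith) (by positivity)
      have h2 : ((N:ℝ)+1) * (ε/(8*((N:ℝ)+1))) = ε/8 := by
        field_simp
      push_cast at h1 ⊢
      linarith
    have : (1 - ε/8) - ε/8 ≤ ∑ i ∈ Finset.range N, (mm i).toReal := by
      have := hN
      simp only [nsmul_eq_mul] at h7
      linarith
    linarith [h2, h3 ▸ this]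
  linarith

theorem stmt15 {X Y : Type*}
    [MetricSpace X] [PolishSpace X] [MeasurableSpace X] [BorelSpace X]
    [MetricSpace Y] [PolishSpace Y] [MeasurableSpace Y] [BorelSpace Y]
    (μn : ℕ → ProbabilityMeasure X) (μ : ProbabilityMeasure X)
    (νn : ℕ → ProbabilityMeasure Y) (ν : ProbabilityMeasure Y)
    (hμ : Tendsto μn atTop (𝓝 μ)) (hν : Tendsto νn atTop (𝓝 ν)) :
    Tendsto (fun n =>
      max
        (⨆ σ : {σ : Measure (X × Y) // IsCoupling σ (μn n : Measure X) (νn n : Measure Y)},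
          ⨅ τ : {τ : Measure (X × Y) // IsCoupling τ (μ : Measure X) (ν : Measure Y)},
            ENNReal.ofReal (dKR (σ : Measure (X × Y)) (τ : Measure (X × Y))))
        (⨆ τ : {τ : Measure (X × Y) // IsCoupling τ (μ : Measure X) (ν : Measure Y)},
          ⨅ σ : {σ : Measure (X × Y) // IsCoupling σ (μn n : Measure X) (νn n : Measure Y)},
            ENNReal.ofReal (dKR (σ : Measure (X × Y)) (τ : Measure (X × Y)))))
      atTop (𝓝 0) := by
  haveI : Nonempty X := by
    by_contra hne
    rw [not_nonempty_iff] at hne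
    have h1 : (μ : Measure X) univ = 1 := measure_univ
    rw [Set.univ_eq_empty_iff.mpr hne, measure_empty] at h1
    exact zero_ne_one h1
  haveI : Nonempty Y := by
    by_contra hne
    rw [not_nonempty_iff] at hne
    have h1 : (ν : Measure Y) univ = 1 := measure_univ
    rw [Set.univ_eq_empty_iff.mpr hne, measure_empty] at h1
    exact zero_ne_one h1
  rw [ENNReal.tendsto_atTop_zero]
  intro ε hε
  set e : ℝ := (min ε 1).toReal / 8 with he
  have hminfin : min ε 1 ≠ ∞ := (lt_of_le_of_lt (min_le_right _ _) ENNReal.one_lt_top).ne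
  have hepos : 0 < e := by
    have h1 : (0:ℝ≥0∞) < min ε 1 := lt_min hε (by norm_num)
    have h2 : 0 < (min ε 1).toReal := ENNReal.toReal_pos h1.ne' hminfin
    rw [he]; linarith
  have hofReal : ENNReal.ofReal (2 * e) ≤ ε := by
    have h1 : (2:ℝ) * e ≤ (min ε 1).toReal := by rw [he]; linarith [hepos]
    calc ENNReal.ofReal (2 * e) ≤ ENNReal.ofReal ((min ε 1).toReal) :=
        ENNReal.ofReal_le_ofReal h1
      _ = min ε 1 := ENNReal.ofReal_toReal hminfin
      _ ≤ ε := min_le_left _ _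
  have h1 := exists_good_coupling hμ hepos
  have h2 := exists_good_coupling hν hepos
  rw [eventually_atTop] at h1 h2
  obtain ⟨N1, hN1⟩ := h1
  obtain ⟨N2, hN2⟩ := h2
  refine ⟨max N1 N2, fun n hn => ?_⟩
  obtain ⟨α, hαp, hαc, hαe⟩ := hN1 n (le_trans (le_max_left _ _) hn)
  obtain ⟨β, hβp, hβc, hβe⟩ := hN2 n (le_trans (le_max_right _ _) hn)
  haveI := hαp; haveI := hβp
  -- swapped couplings
  have hswαc : IsCoupling (α.map Prod.swap) (μn n : Measure X) (μ : Measure X) := by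
    constructor
    · rw [Measure.map_map measurable_fst measurable_swap]
      exact hαc.2
    · rw [Measure.map_map measurable_snd measurable_swap]
      exact hαc.1
  have hswβc : IsCoupling (β.map Prod.swap) (νn n : Measure Y) (ν : Measure Y) := by
    constructor
    · rw [Measure.map_map measurable_fst measurable_swap]
      exact hβc.2
    · rw [Measure.map_map measurable_snd measurable_swap]
      exact hβc.1
  haveI : IsProbabilityMeasure (α.map Prod.swap) :=
    Measure.isProbabilityMeasure_map measurable_swap.aemeasurable
  haveI : IsProbabilityMeasure (β.map Prod.swap) :=
    Measure.isProbabilityMeasure_map measurable_swap.aemeasurable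
  have cminX : Continuous fun p : X × X => min (dist p.1 p.2) 2 :=
    (continuous_dist.comp (continuous_fst.prodMk continuous_snd)).min continuous_const
  have cminY : Continuous fun p : Y × Y => min (dist p.1 p.2) 2 :=
    (continuous_dist.comp (continuous_fst.prodMk continuous_snd)).min continuous_const
  have hswαe : ∫ p, min (dist p.1 p.2) 2 ∂(α.map Prod.swap) ≤ e := by
    rw [integral_map measurable_swap.aemeasurable cminX.aestronglyMeasurable]
    refine le_trans (le_of_eq ?_) hαe
    congr 1
    funext p
    rw [Prod.fst_swap, Prod.snd_swap, dist_comm]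
  have hswβe : ∫ p, min (dist p.1 p.2) 2 ∂(β.map Prod.swap) ≤ e := by
    rw [integral_map measurable_swap.aemeasurable cminY.aestronglyMeasurable]
    refine le_trans (le_of_eq ?_) hβe
    congr 1
    funext p
    rw [Prod.fst_swap, Prod.snd_swap, dist_comm]
  apply max_le
  · apply iSup_le
    rintro ⟨σ, hσ⟩
    haveI : IsProbabilityMeasure (μn n : Measure X) := (μn n).2
    haveI : IsProbabilityMeasure σ := isProbabilityMeasure_of_coupling hσ
    obtain ⟨τ, hτp, hτc, hτbd⟩ := glue hswαc hswβc hσ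
    refine le_trans (iInf_le _ ⟨τ, hτc⟩) ?_
    refine le_trans (ENNReal.ofReal_le_ofReal ?_) hofReal
    apply Real.sSup_le _ (by linarith)
    rintro x ⟨f, hf1, hf2, rfl⟩
    have hb := hτbd f hf1 hf2
    have := abs_le.mp hb
    have hsub : ∫ p, f p ∂σ - ∫ p, f p ∂τ ≤
        (∫ p, min (dist p.1 p.2) 2 ∂(α.map Prod.swap))
        + ∫ p, min (dist p.1 p.2) 2 ∂(β.map Prod.swap) := by
      have := abs_le.mp hb
      linarith [this.1]
    linarith [hswαe, hswβe]
  · apply iSup_le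
    rintro ⟨τ, hτ⟩
    haveI : IsProbabilityMeasure (μ : Measure X) := μ.2
    haveI : IsProbabilityMeasure τ := isProbabilityMeasure_of_coupling hτ
    obtain ⟨σ, hσp, hσc, hσbd⟩ := glue hαc hβc hτ
    refine le_trans (iInf_le _ ⟨σ, hσc⟩) ?_
    refine le_trans (ENNReal.ofReal_le_ofReal ?_) hofReal
    apply Real.sSup_le _ (by linarith)
    rintro x ⟨f, hf1, hf2, rfl⟩
    have hb := hσbd f hf1 hf2
    have := abs_le.mp hb
    linarith [hαe, hβe, this.1]
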